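/- Let A and B be commuting n×n real matrices and let M : ℝ → so(n) be a differentiable curve and Ω : ℝ → so(n) a curve such that Ṁ(t) = [M(t), Ω(t)] and [M(t), B] = [Ω(t), A] for all t. Then for every k ∈ ℕ and every λ ∈ ℝ the function t ↦ tr((M(t) + λA)^k) is constant; i.e., all polynomials tr((M + λA)^k) are first integrals of the Manakov flow. -/

import Mathlib

open Matrix

/-- Along a solution of the Euler equation `Ṁ = [M, Ω]` satisfying the
Manakov condition `[M(t), B] = [Ω(t), A]` with `A`, `B` commuting, every function
`t ↦ tr((M(t) + λA)^k)` is constant: the polynomials `tr((M + λA)^k)` are first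
integrals of the Manakov flow. -/
theorem manakov_integrals_are_conserved (n : ℕ) (A B : Matrix (Fin n) (Fin n) ℝ)
    (hAB : A * B = B * A)
    (M Ω : ℝ → Matrix (Fin n) (Fin n) ℝ)
    (hMskew : ∀ t, (M t)ᵀ = -(M t)) (hΩskew : ∀ t, (Ω t)ᵀ = -(Ω t))
    (hflow : ∀ t i j, HasDerivAt (fun s => M s i j) ((M t * Ω t - Ω t * M t) i j) t)
    (hManakov : ∀ t, M t * B - B * M t = Ω t * A - A * Ω t) :
    ∀ (k : ℕ) (lam : ℝ) (s t : ℝ),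
      ((M s + lam • A) ^ k).trace = ((M t + lam • A) ^ k).trace := by
  intro k lam s t
  set L : ℝ → Matrix (Fin n) (Fin n) ℝ := fun u => M u + lam • A with hLdef
  set W : ℝ → Matrix (Fin n) (Fin n) ℝ := fun u => Ω u + lam • B with hWdef
  have hL' : ∀ u i j, HasDerivAt (fun v => L v i j)
      ((L u * W u - W u * L u) i j) u := by
    intro u i j
    have h1 : HasDerivAt (fun v => M v i j + lam * A i j)
        ((M u * Ω u - Ω u * M u) i j) u := (hflow u i j).add_const _
    have key : L u * W u - W u * L u = M u * Ω u - Ω u * M u := by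
      have hm := hManakov u
      simp only [hLdef, hWdef]
      have hexp : (M u + lam • A) * (Ω u + lam • B) - (Ω u + lam • B) * (M u + lam • A)
          = (M u * Ω u - Ω u * M u) + lam • ((M u * B - B * M u) - (Ω u * A - A * Ω u))
            + (lam * lam) • (A * B - B * A) := by
        simp only [Matrix.add_mul, Matrix.mul_add, Matrix.smul_mul, Matrix.mul_smul,
          smul_smul, smul_sub, smul_add]
        abel
      rw [hexp, hm, hAB]
      simp
    rw [key]
    simpa [hLdef, Matrix.add_apply, Matrix.smul_apply, smul_eq_mul] using h1
  have hpow : ∀ (m : ℕ) (u : ℝ) (i j : Fin n), HasDerivAt (fun v => ((L v) ^ m) i j)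
      (((L u) ^ m * W u - W u * (L u) ^ m) i j) u := by
    intro m
    induction m with
    | zero =>
      intro u i j
      simp only [pow_zero, one_mul, mul_one, sub_self, Matrix.zero_apply]
      exact hasDerivAt_const _ _
    | succ m ih =>
      intro u i j
      have h : HasDerivAt (fun v => ∑ x, ((L v) ^ m) i x * L v x j)
          (∑ x, ((((L u) ^ m * W u - W u * (L u) ^ m) i x) * L u x j
            + ((L u) ^ m) i x * ((L u * W u - W u * L u) x j))) u := by
        apply HasDerivAt.fun_sum
        intro x _
        exact (ih u i x).mul (hL' u x j)
      have heq : (fun v => ((L v) ^ (m + 1)) i j)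
          = fun v => ∑ x, ((L v) ^ m) i x * L v x j := by
        funext v; rw [pow_succ, Matrix.mul_apply]
      rw [heq]
      convert h using 1
      have hmat : (L u) ^ (m + 1) * W u - W u * (L u) ^ (m + 1)
          = ((L u) ^ m * W u - W u * (L u) ^ m) * L u
            + (L u) ^ m * (L u * W u - W u * L u) := by
        rw [pow_succ]
        noncomm_ring
      rw [hmat, Matrix.add_apply, Matrix.mul_apply, Matrix.mul_apply,
        ← Finset.sum_add_distrib]
  have hf : ∀ u : ℝ, HasDerivAt (fun v => ((L v) ^ k).trace) 0 u := by
    intro u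
    have h : HasDerivAt (fun v => ∑ i, ((L v) ^ k) i i)
        (∑ i, ((L u) ^ k * W u - W u * (L u) ^ k) i i) u :=
      HasDerivAt.fun_sum fun i _ => hpow k u i i
    have htr : (∑ i, ((L u) ^ k * W u - W u * (L u) ^ k) i i) = 0 := by
      have : (∑ i, ((L u) ^ k * W u - W u * (L u) ^ k) i i)
          = ((L u) ^ k * W u - W u * (L u) ^ k).trace := by
        simp [Matrix.trace, Matrix.diag]
      rw [this, Matrix.trace_sub, Matrix.trace_mul_comm, sub_self]
    rw [htr] at h
    have hfun : (fun v => ((L v) ^ k).trace) = fun v => ∑ i, ((L v) ^ k) i i := by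
      funext v; simp [Matrix.trace, Matrix.diag]
    rw [hfun]
    exact h
  have hconst := is_const_of_deriv_eq_zero (f := fun v => ((L v) ^ k).trace)
    (fun u => (hf u).differentiableAt) (fun u => (hf u).deriv) s t
  simpa [hLdef] using hconst
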